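/- Let q = 2n+1 be an odd prime power and χ_q a generator of the group of multiplicative characters of F_q. Then for every integer k with 1 ≤ k ≤ n, 2·Σ_{x ∈ S_q} φ_q(1+x)χ_q^k(x) = (−1)^k·(J_q(φ_q,χ_q^k) + J_q(φ_q,χ_q^{−k})), where S_q is the set of nonzero squares of F_q. -/

import Mathlib

open Finset


private lemma jac_aux' {F : Type*} [Field F] [Fintype F] (α β : MulChar F ℂ) :
    jacobiSum α β = α (-1) * jacobiSum α (α * β)⁻¹ := by
  classical
  rw [jacobiSum, jacobiSum, Finset.mul_sum]
  rw [← Finset.sum_erase (a := (1:F)) univ (f := fun x => α x * β (1 - x))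
        (by show α 1 * β (1-1) = 0; rw [sub_self, MulChar.map_zero, mul_zero]),
      ← Finset.sum_erase (a := (1:F)) univ
        (f := fun x => α (-1) * (α x * (α * β)⁻¹ (1 - x)))
        (by show α (-1) * (α 1 * (α * β)⁻¹ (1-1)) = 0
            rw [sub_self, MulChar.map_zero, mul_zero, mul_zero])]
  refine Finset.sum_nbij' (i := fun x => x / (x - 1)) (j := fun x => x / (x - 1)) ?_ ?_ ?_ ?_ ?_
  · intro x hx
    simp only [mem_erase, mem_univ, and_true] at hx ⊢
    intro h
    rw [div_eq_one_iff_eq (sub_ne_zero.mpr hx)] at h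
    exact zero_ne_one (α := F) (by linear_combination -h)
  · intro x hx
    simp only [mem_erase, mem_univ, and_true] at hx ⊢
    intro h
    rw [div_eq_one_iff_eq (sub_ne_zero.mpr hx)] at h
    exact zero_ne_one (α := F) (by linear_combination -h)
  · intro x hx
    simp only [mem_erase, mem_univ, and_true] at hx
    have h1 : x - 1 ≠ 0 := sub_ne_zero.mpr hx
    field_simp
    ring
  · intro x hx
    simp only [mem_erase, mem_univ, and_true] at hx
    have h1 : x - 1 ≠ 0 := sub_ne_zero.mpr hx
    field_simp
    ring
  · intro x hx
    simp only [mem_erase, mem_univ, and_true] at hx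
    show α x * β (1 - x) = α (-1) * (α (x/(x-1)) * (α * β)⁻¹ (1 - x/(x-1)))
    by_cases hx0 : x = 0
    · subst hx0
      norm_num [MulChar.map_zero]
    · have h1 : x - 1 ≠ 0 := sub_ne_zero.mpr hx
      have e1 : (1 : F) - x / (x - 1) = -(x - 1)⁻¹ := by field_simp; ring
      rw [e1, MulChar.inv_apply', inv_neg, inv_inv, neg_sub, div_eq_mul_inv, map_mul,
        MulChar.mul_apply]
      have hαm : α (-1) * α (-1) = 1 := by rw [← map_mul]; norm_num
      have hc : α ((x - 1)⁻¹) * α (x - 1) = 1 := by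
        rw [← map_mul, inv_mul_cancel₀ h1, MulChar.map_one]
      have e2 : (1 : F) - x = -1 * (x - 1) := by ring
      rw [e2, map_mul, map_mul]
      calc α x * (β (-1) * β (x-1))
          = (α (-1) * α (-1)) * (α ((x-1)⁻¹) * α (x-1)) * (α x * (β (-1) * β (x-1))) := by
            rw [hαm, hc]; ring
        _ = α (-1) * (α x * α ((x-1)⁻¹) * (α (-1) * α (x-1) * (β (-1) * β (x-1)))) := by
            ring

private lemma sum_shift' {F : Type*} [Field F] [Fintype F] (γ δ : MulChar F ℂ) :
    ∑ x : F, γ x * δ (1 + x) = γ (-1) * jacobiSum γ δ := by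
  rw [jacobiSum, Finset.mul_sum]
  refine Fintype.sum_equiv (Equiv.neg F) _ _ (fun x => ?_)
  show γ x * δ (1 + x) = γ (-1) * (γ (-x) * δ (1 - -x))
  rw [show (1:F) - -x = 1 + x by ring, ← mul_assoc, ← map_mul,
    show (-1 : F) * -x = x by ring]

private lemma phi_sq_one' {F : Type*} [Field F] [Fintype F] {φ : MulChar F ℂ} (hφ2 : φ ^ 2 = 1)
    {x : F} (hx : x ≠ 0) (hsq : IsSquare x) : φ x = 1 := by
  obtain ⟨t, rfl⟩ := hsq
  have ht : t ≠ 0 := fun h => hx (by simp [h])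
  rw [map_mul, ← sq, ← MulChar.pow_apply' φ two_ne_zero, hφ2,
    MulChar.one_apply (isUnit_iff_ne_zero.mpr ht)]

private lemma phi_nonsq' {F : Type*} [Field F] [Fintype F] [DecidableEq F] {φ : MulChar F ℂ}
    (hφ2 : φ ^ 2 = 1) (hφ1 : φ ≠ 1) {x : F} (hx : x ≠ 0) (hns : ¬ IsSquare x) : φ x = -1 := by
  have hpm : φ x = 1 ∨ φ x = -1 := mul_self_eq_one_iff.mp (by
    rw [← map_mul, phi_sq_one' hφ2 (mul_ne_zero hx hx) ⟨x, rfl⟩])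
  refine hpm.resolve_left fun hx1 => hφ1 ?_
  rw [MulChar.eq_one_iff]
  intro a
  by_cases hs : IsSquare (a : F)
  · exact phi_sq_one' hφ2 a.ne_zero hs
  · have h1 : quadraticChar F x = -1 := quadraticChar_neg_one_iff_not_isSquare.mpr hns
    have h2 : quadraticChar F (a : F) = -1 := quadraticChar_neg_one_iff_not_isSquare.mpr hs
    have hinv : quadraticChar F x⁻¹ = -1 := by
      have h3 : quadraticChar F x⁻¹ * quadraticChar F x = 1 := by
        rw [← map_mul, inv_mul_cancel₀ hx, MulChar.map_one]
      rw [h1] at h3; linarith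
    have h4 : quadraticChar F ((a : F) * x⁻¹) = 1 := by
      rw [map_mul, h2, hinv]; ring
    have h5 : IsSquare ((a : F) * x⁻¹) :=
      (quadraticChar_one_iff_isSquare (mul_ne_zero a.ne_zero (inv_ne_zero hx))).mp h4
    have h6 : φ ((a : F) * x⁻¹ * x) = 1 := by
      rw [map_mul, phi_sq_one' hφ2 (mul_ne_zero a.ne_zero (inv_ne_zero hx)) h5, hx1, mul_one]
    rwa [mul_assoc, inv_mul_cancel₀ hx, mul_one] at h6

private lemma chi_neg_one' {F : Type*} [Field F] [Fintype F] (χ : MulChar F ℂ)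
    (hχ : ∀ ψ : MulChar F ℂ, ψ ∈ Subgroup.zpowers χ) (hne : (-1 : F) ≠ 1) : χ (-1) = -1 := by
  have hsq : χ (-1) * χ (-1) = 1 := by rw [← map_mul]; norm_num
  refine (mul_self_eq_one_iff.mp hsq).resolve_left fun h => ?_
  obtain ⟨ψ, hψ⟩ := MulChar.exists_apply_ne_one_of_hasEnoughRootsOfUnity F ℂ hne
  obtain ⟨j, hj⟩ := Subgroup.mem_zpowers_iff.mp (hχ ψ)
  apply hψ
  rw [← hj]
  obtain ⟨m, rfl | rfl⟩ := j.eq_nat_or_neg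
  · rw [zpow_natCast]
    have := MulChar.pow_apply_coe χ m (-1 : Fˣ)
    simpa [h] using this
  · rw [zpow_neg, zpow_natCast, MulChar.inv_apply', show ((-1 : F))⁻¹ = -1 by norm_num]
    have := MulChar.pow_apply_coe χ m (-1 : Fˣ)
    simpa [h] using this

open scoped Classical in
/-- Let `q = 2n+1` be an odd prime power and `χ` a generator of the group of
multiplicative characters of `F_q`. Then for every `1 ≤ k ≤ n`,
`2·∑_{x ∈ S_q} φ(1+x)χ^k(x) = (-1)^k·(J_q(φ,χ^k) + J_q(φ,χ^{-k}))`,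
where `S_q` is the set of nonzero squares of `F_q`. -/
theorem stmt_11 {F : Type*} [Field F] [Fintype F] (n : ℕ)
    (hcard : Fintype.card F = 2 * n + 1)
    (φ χ : MulChar F ℂ)
    (hφ : φ ^ 2 = 1 ∧ φ ≠ 1)
    (hχ : ∀ ψ : MulChar F ℂ, ψ ∈ Subgroup.zpowers χ) :
    ∀ k ∈ Finset.Icc 1 n,
      2 * ∑ x ∈ Finset.univ.filter (fun x : F => x ≠ 0 ∧ IsSquare x), φ (1 + x) * (χ ^ k) x =
        (-1) ^ k * (jacobiSum φ (χ ^ k) + jacobiSum φ (χ ^ (-(k : ℤ)))) := by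
  classical
  intro k hk
  have hne : (-1 : F) ≠ 1 := by
    have h2 : ringChar F ≠ 2 := by
      intro h
      have := FiniteField.even_card_of_char_two h
      omega
    exact Ring.neg_one_ne_one_of_char_ne_two h2
  have hχm : χ (-1) = -1 := chi_neg_one' χ hχ hne
  have step1 : ∑ x : F, (1 + φ x) * (φ (1 + x) * (χ ^ k) x)
      = 2 * ∑ x ∈ Finset.univ.filter (fun x : F => x ≠ 0 ∧ IsSquare x), φ (1 + x) * (χ ^ k) x := by
    rw [← Finset.sum_filter_add_sum_filter_not univ (fun x : F => x ≠ 0 ∧ IsSquare x), mul_sum]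
    have hz : ∑ x ∈ univ.filter (fun x : F => ¬(x ≠ 0 ∧ IsSquare x)),
        (1 + φ x) * (φ (1 + x) * (χ ^ k) x) = 0 := by
      refine Finset.sum_eq_zero fun x hxx => ?_
      rw [mem_filter] at hxx
      by_cases hx0 : x = 0
      · simp [hx0, MulChar.map_zero]
      · have hns : ¬ IsSquare x := fun hs => hxx.2 ⟨hx0, hs⟩
        rw [phi_nonsq' hφ.1 hφ.2 hx0 hns]
        norm_num
    rw [hz, add_zero]
    refine Finset.sum_congr rfl fun x hxx => ?_
    rw [mem_filter] at hxx
    rw [phi_sq_one' hφ.1 hxx.2.1 hxx.2.2]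
    norm_num
  have step2 : ∑ x : F, (1 + φ x) * (φ (1 + x) * (χ ^ k) x)
      = (∑ x : F, (χ ^ k) x * φ (1 + x)) + ∑ x : F, (φ * χ ^ k) x * φ (1 + x) := by
    rw [← sum_add_distrib]
    exact Finset.sum_congr rfl fun x _ => by rw [MulChar.mul_apply]; ring
  have hk1 : (χ ^ k) (-1 : F) = (-1) ^ k := by
    have := MulChar.pow_apply_coe χ k (-1 : Fˣ)
    simp only [Units.val_neg, Units.val_one] at this
    rw [this, hχm]
  have hφm : φ (-1 : F) * φ (-1 : F) = 1 := by rw [← map_mul]; norm_num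
  have hinv : (φ * (φ * χ ^ k))⁻¹ = χ ^ (-(k : ℤ)) := by
    rw [← mul_assoc, ← sq, hφ.1, one_mul, zpow_neg, zpow_natCast]
  have hJ2 : jacobiSum (φ * χ ^ k) φ = φ (-1) * jacobiSum φ (χ ^ (-(k : ℤ))) := by
    rw [jacobiSum_comm, jac_aux' φ (φ * χ ^ k), hinv]
  calc 2 * ∑ x ∈ Finset.univ.filter (fun x : F => x ≠ 0 ∧ IsSquare x), φ (1 + x) * (χ ^ k) x
      = (∑ x : F, (χ ^ k) x * φ (1 + x)) + ∑ x : F, (φ * χ ^ k) x * φ (1 + x) := by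
        rw [← step1, step2]
    _ = (χ ^ k) (-1 : F) * jacobiSum (χ ^ k) φ
        + (φ * χ ^ k) (-1 : F) * jacobiSum (φ * χ ^ k) φ := by
        rw [sum_shift', sum_shift']
    _ = (-1) ^ k * jacobiSum φ (χ ^ k)
        + (φ (-1) * (-1) ^ k) * (φ (-1) * jacobiSum φ (χ ^ (-(k : ℤ)))) := by
        rw [hk1, hJ2, jacobiSum_comm, MulChar.mul_apply, hk1]
    _ = (-1) ^ k * (jacobiSum φ (χ ^ k) + jacobiSum φ (χ ^ (-(k : ℤ)))) := by
        linear_combination ((-1 : ℂ) ^ k * jacobiSum φ (χ ^ (-(k : ℤ)))) * hφm
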